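/- arXiv:2502.14266 — 3 statements merged into one kernel-verified Lean document; each statement's English description precedes it below -/
import Mathlib

section
/- Let α > 1 be an odd positive integer such that every prime divisor p of α satisfies p ≡ 3 (mod 4), and let n = 2α. Then 2^{ω(n)} does not divide φ(n), where ω(n) denotes the number of distinct prime divisors of n and φ denotes Euler's totient function. -/
lemma factor_v2 (p k : ℕ) (_hp : p.Prime) (h3 : p % 4 = 3) :
    (p ^ (k - 1) * (p - 1)).factorization 2 = 1 := by
  have hp3 : 3 ≤ p := by omega
  obtain ⟨m, hm, hmo⟩ : ∃ m, p - 1 = 2 * m ∧ m % 2 = 1 := ⟨(p-1)/2, by omega, by omega⟩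
  have hm0 : m ≠ 0 := by omega
  have hpow : (p ^ (k - 1)) ≠ 0 := pow_ne_zero _ (by omega)
  rw [Nat.factorization_mul hpow (by omega), hm,
    Nat.factorization_mul (by norm_num) hm0, Nat.factorization_pow]
  have h1 : p.factorization 2 = 0 :=
    Nat.factorization_eq_zero_of_not_dvd (by omega : ¬ 2 ∣ p)
  have h2 : m.factorization 2 = 0 :=
    Nat.factorization_eq_zero_of_not_dvd (by omega : ¬ 2 ∣ m)
  have h3' : (2 : ℕ).factorization 2 = 1 := by
    rw [Nat.Prime.factorization Nat.prime_two]; simp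
  simp [h1, h2, h3']

theorem stmt_7 (α n : ℕ) (hα : 1 < α) (hodd : Odd α)
    (hprimes : ∀ p : ℕ, p.Prime → p ∣ α → p % 4 = 3) (hn : n = 2 * α) :
    ¬ (2 ^ n.primeFactors.card ∣ n.totient) := by
  subst hn
  have hα0 : α ≠ 0 := by omega
  have hcop : Nat.Coprime 2 α := by
    have h2 : ¬ 2 ∣ α := by
      rw [Nat.two_dvd_ne_zero]; exact Nat.odd_iff.mp hodd
    exact (Nat.Prime.coprime_iff_not_dvd Nat.prime_two).mpr h2
  have htot : (2 * α).totient = α.totient := by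
    rw [Nat.totient_mul hcop, Nat.totient_two, one_mul]
  have h2notin : 2 ∉ α.primeFactors := by
    intro h
    have := Nat.dvd_of_mem_primeFactors h
    exact (Nat.two_dvd_ne_zero.mpr (Nat.odd_iff.mp hodd)) this
  have hcard : (2 * α).primeFactors.card = α.primeFactors.card + 1 := by
    rw [Nat.primeFactors_mul (by norm_num) hα0, Nat.Prime.primeFactors Nat.prime_two]
    rw [Finset.union_comm, Finset.card_union_of_disjoint (by simpa using h2notin)]
    simp
  rw [htot, hcard]
  intro hdvd
  have htne : α.totient ≠ 0 := Nat.totient_pos.mpr (by omega) |>.ne'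
  have hle := (Nat.Prime.pow_dvd_iff_le_factorization Nat.prime_two htne).mp hdvd
  -- compute factorization of totient at 2
  have heq : α.totient = ∏ p ∈ α.primeFactors, p ^ (α.factorization p - 1) * (p - 1) := by
    rw [Nat.totient_eq_prod_factorization hα0]
    rfl
  have hne : ∀ p ∈ α.primeFactors, p ^ (α.factorization p - 1) * (p - 1) ≠ 0 := by
    intro p hp
    have hpp := Nat.prime_of_mem_primeFactors hp
    have := hpp.two_le
    have : 0 < p ^ (α.factorization p - 1) * (p - 1) :=
      Nat.mul_pos (Nat.pow_pos (by omega)) (by omega)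
    omega
  have hfact : α.totient.factorization 2 = α.primeFactors.card := by
    rw [heq, Nat.factorization_prod hne]
    rw [Finset.sum_apply']
    rw [Finset.sum_congr rfl (fun p hp => factor_v2 p (α.factorization p)
      (Nat.prime_of_mem_primeFactors hp)
      (hprimes p (Nat.prime_of_mem_primeFactors hp) (Nat.dvd_of_mem_primeFactors hp)))]
    simp
  omega
end

section
/- For positive integers m and n with n ∣ m, the number of (not necessarily unital) ring homomorphisms from ℤ/mℤ to ℤ/nℤ equals 2^{ω(n)}, where ω(n) denotes the number of distinct prime divisors of n. -/
lemma idem_prime_pow {p k : ℕ} (hp : p.Prime) (hk : 0 < k) (x : ZMod (p ^ k))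
    (hx : x * x = x) : x = 0 ∨ x = 1 := by
  haveI : NeZero (p ^ k) := ⟨pow_ne_zero _ hp.pos.ne'⟩
  set a : ℤ := (x.val : ℤ) with ha
  have hxa : ((a : ℤ) : ZMod (p ^ k)) = x := by
    simp [ha, ZMod.natCast_rightInverse x]
  have hdvd : ((p : ℤ)) ^ k ∣ a * (a - 1) := by
    have : ((a * (a - 1) : ℤ) : ZMod (p ^ k)) = 0 := by
      push_cast
      rw [hxa]
      linear_combination hx
    have := (ZMod.intCast_zmod_eq_zero_iff_dvd _ _).mp this
    exact_mod_cast (by push_cast at this ⊢; exact this)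
  have hpZ : Prime (p : ℤ) := Nat.prime_iff_prime_int.mp hp
  have hpd : (p : ℤ) ∣ a * (a - 1) :=
    dvd_trans (dvd_pow_self _ hk.ne') hdvd
  rcases hpZ.dvd_mul.mp hpd with hpa | hpa1
  · -- p ∣ a, so p ∤ a - 1, so p^k ∣ a
    have hnd : ¬ (p : ℤ) ∣ (a - 1) := by
      intro hd
      have : (p : ℤ) ∣ 1 := by
        have := dvd_sub hpa hd; simpa using this
      exact hpZ.not_dvd_one this
    have hco : IsCoprime ((p : ℤ) ^ k) (a - 1) :=
      ((hpZ.coprime_iff_not_dvd.mpr hnd)).pow_left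
    have : ((p : ℤ)) ^ k ∣ a := hco.dvd_of_dvd_mul_right hdvd
    left
    rw [← hxa]
    rw [ZMod.intCast_zmod_eq_zero_iff_dvd]
    exact_mod_cast this
  · -- p ∣ a - 1
    have hnd : ¬ (p : ℤ) ∣ a := by
      intro hd
      have : (p : ℤ) ∣ 1 := by
        have := dvd_sub hd hpa1; simpa using this
      exact hpZ.not_dvd_one this
    have hco : IsCoprime ((p : ℤ) ^ k) a :=
      ((hpZ.coprime_iff_not_dvd.mpr hnd)).pow_left
    have : ((p : ℤ)) ^ k ∣ (a - 1) := hco.dvd_of_dvd_mul_left hdvd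
    right
    have h0 : x - 1 = 0 := by
      have : (((a - 1 : ℤ)) : ZMod (p ^ k)) = 0 := by
        rw [ZMod.intCast_zmod_eq_zero_iff_dvd]
        exact_mod_cast this
      push_cast at this
      rw [hxa] at this
      exact this
    linear_combination h0

lemma card_idem_prime_pow {p k : ℕ} (hp : p.Prime) (hk : 0 < k) :
    Nat.card {x : ZMod (p ^ k) // x * x = x} = 2 := by
  haveI : Fact (1 < p ^ k) := ⟨one_lt_pow₀ hp.one_lt hk.ne'⟩
  have e : {x : ZMod (p ^ k) // x * x = x} ≃ ({0, 1} : Set (ZMod (p ^ k))) :=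
    Equiv.subtypeEquivRight fun x => by
      simp only [Set.mem_insert_iff, Set.mem_singleton_iff]
      constructor
      · exact idem_prime_pow hp hk x
      · rintro (rfl | rfl) <;> ring
  rw [Nat.card_congr e, Nat.card_coe_set_eq, Set.ncard_pair (zero_ne_one)]

lemma card_idem (n : ℕ) (hn : 0 < n) :
    Nat.card {e : ZMod n // e * e = e} = 2 ^ n.primeFactors.card := by
  set ι := (n.primeFactors : Finset ℕ)
  set a : ι → ℕ := fun p => (p : ℕ) ^ n.factorization p with ha
  have copr : Pairwise (Function.onFun Nat.Coprime a) := by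
    intro i j hij
    have hi := Nat.prime_of_mem_primeFactors i.2
    have hj := Nat.prime_of_mem_primeFactors j.2
    have : (i : ℕ) ≠ (j : ℕ) := fun hh => hij (Subtype.ext hh)
    exact Nat.Coprime.pow _ _ ((Nat.coprime_primes hi hj).mpr this)
  have hprod : ∏ i : ι, a i = n := by
    show ∏ i : ι, (i : ℕ) ^ n.factorization i = n
    rw [Finset.univ_eq_attach]
    rw [Finset.prod_attach ι (fun p => p ^ n.factorization p)]
    simpa [Nat.prod_factorization_eq_prod_primeFactors] using
      Nat.factorization_prod_pow_eq_self hn.ne'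
  have E := ZMod.prodEquivPi a copr
  rw [hprod] at E
  have e1 : {e : ZMod n // e * e = e} ≃ {f : (i : ι) → ZMod (a i) // ∀ i, f i * f i = f i} :=
    E.toEquiv.subtypeEquiv fun e => by
      show e * e = e ↔ ∀ i, E e i * E e i = E e i
      constructor
      · intro he i
        have hm : E (e * e) = E e := by rw [he]
        rw [map_mul] at hm
        exact congrFun hm i
      · intro he
        apply E.injective
        rw [map_mul]
        funext i
        exact he i
  have e2 : {f : (i : ι) → ZMod (a i) // ∀ i, f i * f i = f i} ≃
      ((i : ι) → {x : ZMod (a i) // x * x = x}) := Equiv.subtypePiEquivPi (p := fun i x => x * x = x)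
  rw [Nat.card_congr (e1.trans e2), Nat.card_pi]
  have : ∀ i : ι, Nat.card {x : ZMod (a i) // x * x = x} = 2 := fun i =>
    card_idem_prime_pow (Nat.prime_of_mem_primeFactors i.2)
      (Nat.Prime.factorization_pos_of_dvd (Nat.prime_of_mem_primeFactors i.2) hn.ne'
        (Nat.dvd_of_mem_primeFactors i.2))
  simp only [this]
  rw [Finset.prod_const, Finset.card_univ, Fintype.card_coe]

def homEquivIdem (m n : ℕ) [NeZero m] (h : n ∣ m) :
    (ZMod m →ₙ+* ZMod n) ≃ {e : ZMod n // e * e = e} where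
  toFun f := ⟨f 1, by rw [← map_mul, mul_one]⟩
  invFun e :=
    { toFun := fun x => ZMod.castHom h (ZMod n) x * e.1
      map_add' := fun x y => by
        show ZMod.castHom h (ZMod n) (x + y) * e.1 = _
        rw [map_add, add_mul]
      map_zero' := by
        show ZMod.castHom h (ZMod n) 0 * e.1 = 0
        rw [map_zero, zero_mul]
      map_mul' := fun x y => by
        show ZMod.castHom h (ZMod n) (x * y) * e.1 = _
        rw [map_mul]
        linear_combination (-(ZMod.castHom h (ZMod n) x * ZMod.castHom h (ZMod n) y)) * e.2 }
  left_inv f := by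
    ext x
    have hx : ((x.val : ℕ) : ZMod m) = x := ZMod.natCast_rightInverse x
    have key : f x = (x.val : ZMod n) * f 1 := by
      calc f x = f (x.val • (1 : ZMod m)) := by rw [nsmul_eq_mul, mul_one, hx]
        _ = x.val • f 1 := map_nsmul f _ _
        _ = (x.val : ZMod n) * f 1 := by rw [nsmul_eq_mul]
    show ZMod.castHom h (ZMod n) x * f 1 = f x
    rw [key, ZMod.castHom_apply, ZMod.natCast_val]
  right_inv e := by
    ext
    show ZMod.castHom h (ZMod n) 1 * e.1 = e.1
    rw [map_one, one_mul]

theorem stmt_8 (m n : ℕ) (hm : 0 < m) (hn : 0 < n) (h : n ∣ m) :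
    Nat.card (ZMod m →ₙ+* ZMod n) = 2 ^ n.primeFactors.card := by
  haveI : NeZero m := ⟨hm.ne'⟩
  rw [Nat.card_congr (homEquivIdem m n h), card_idem n hn]
end

section
/- Let m and n be positive integers with n ∣ m and n > 2, and suppose n is NOT of the form n = 2α with α an odd integer all of whose prime divisors p satisfy p ≡ 3 (mod 4). Then the number of (not necessarily unital) ring homomorphisms from ℤ/mℤ to ℤ/nℤ divides the number of surjective additive group homomorphisms from ℤ/mℤ to ℤ/nℤ. -/
open Function

lemma aux_apply {m n : ℕ} (hdvd : n ∣ m) (f : ZMod m →+ ZMod n) (x : ZMod m) :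
    f x = ZMod.castHom hdvd (ZMod n) x * f 1 := by
  obtain ⟨k, rfl⟩ := ZMod.intCast_surjective x
  rw [map_intCast (ZMod.castHom hdvd (ZMod n)) k, ← zsmul_eq_mul, ← map_zsmul, zsmul_eq_mul,
    mul_one]

noncomputable def auxAddEquiv {m n : ℕ} (hdvd : n ∣ m) : (ZMod m →+ ZMod n) ≃ ZMod n where
  toFun f := f 1
  invFun a := (AddMonoidHom.mulRight a).comp (ZMod.castHom hdvd (ZMod n)).toAddMonoidHom
  left_inv f := by
    ext x
    simp only [AddMonoidHom.comp_apply, AddMonoidHom.coe_mulRight, RingHom.toAddMonoidHom_eq_coe,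
      AddMonoidHom.coe_coe]
    exact (aux_apply hdvd f x).symm
  right_inv a := by
    show ZMod.castHom hdvd (ZMod n) 1 * a = a
    rw [map_one, one_mul]

noncomputable def auxRingEquiv {m n : ℕ} (hdvd : n ∣ m) :
    (ZMod m →ₙ+* ZMod n) ≃ {e : ZMod n // IsIdempotentElem e} where
  toFun f := ⟨f 1, by have h := (map_mul f 1 1).symm; rwa [one_mul] at h⟩
  invFun e :=
    { toFun := fun x => ZMod.castHom hdvd (ZMod n) x * e.1
      map_zero' := by simp
      map_add' := fun x y => by rw [map_add, add_mul]
      map_mul' := fun x y => by rw [map_mul, mul_mul_mul_comm, e.2.eq] }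
  left_inv f := by
    ext x
    exact (aux_apply hdvd f.toAddMonoidHom x).symm
  right_inv e := by
    apply Subtype.ext
    show ZMod.castHom hdvd (ZMod n) 1 * e.1 = e.1
    rw [map_one, one_mul]


-- idempotents in ZMod p^k are 0 or 1
lemma aux_idem_prime_pow {p k : ℕ} (hp : p.Prime) (hk : 0 < k) (e : ZMod (p ^ k))
    (he : IsIdempotentElem e) : e = 0 ∨ e = 1 := by
  haveI : Fact p.Prime := ⟨hp⟩
  haveI : NeZero (p ^ k) := ⟨pow_ne_zero _ hp.pos.ne'⟩
  have hdvd : p ∣ p ^ k := dvd_pow_self p hk.ne'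
  set π := ZMod.castHom hdvd (ZMod p) with hπ
  have key : ∀ x : ZMod (p ^ k), IsIdempotentElem x → π x = 0 → x = 0 := by
    intro x hx h0
    have hx' : x = ((x.val : ℕ) : ZMod (p ^ k)) := (ZMod.natCast_rightInverse x).symm
    have hπx : π x = ((x.val : ℕ) : ZMod p) := by nth_rewrite 1 [hx']; rw [map_natCast]
    have hpd : p ∣ x.val := by
      rwa [hπx, ZMod.natCast_eq_zero_iff] at h0
    have hxk : x ^ k = 0 := by
      rw [hx', ← Nat.cast_pow, ZMod.natCast_eq_zero_iff]
      exact pow_dvd_pow_of_dvd hpd k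
    have : x ^ k = x := by
      have := hx.pow_succ_eq (k - 1)
      rwa [Nat.sub_add_cancel hk] at this
    rw [← this, hxk]
  have hπe : IsIdempotentElem (π e) := he.map π
  rcases IsIdempotentElem.iff_eq_zero_or_one.mp hπe with h | h
  · exact Or.inl (key e he h)
  · right
    have h1 : π (1 - e) = 0 := by rw [map_sub, map_one, h, sub_self]
    have := key (1 - e) he.one_sub h1
    exact (sub_eq_zero.mp this).symm


def auxRingEquivIdem {R S : Type*} [Semiring R] [Semiring S] (f : R ≃+* S) :
    {e : R // IsIdempotentElem e} ≃ {e : S // IsIdempotentElem e} where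
  toFun e := ⟨f e.1, e.2.map f⟩
  invFun e := ⟨f.symm e.1, e.2.map f.symm⟩
  left_inv e := by simp
  right_inv e := by simp

def auxProdIdem {A B : Type*} [Semiring A] [Semiring B] :
    {e : A × B // IsIdempotentElem e} ≃ {a : A // IsIdempotentElem a} × {b : B // IsIdempotentElem b} where
  toFun e := (⟨e.1.1, congrArg Prod.fst e.2⟩, ⟨e.1.2, congrArg Prod.snd e.2⟩)
  invFun x := ⟨(x.1.1, x.2.1), Prod.ext x.1.2 x.2.2⟩
  left_inv e := rfl
  right_inv x := rfl

lemma aux_card_idem : ∀ N : ℕ, 0 < N →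
    Nat.card {e : ZMod N // IsIdempotentElem e} = 2 ^ N.primeFactors.card := by
  intro N
  induction N using Nat.recOnPosPrimePosCoprime with
  | prime_pow p k hp hk =>
    intro _
    have hp' : p.Prime := hp
    haveI : Fact p.Prime := ⟨hp'⟩
    haveI : NeZero (p ^ k) := ⟨pow_ne_zero _ hp'.pos.ne'⟩
    haveI : Fact (1 < p ^ k) := ⟨Nat.one_lt_pow hk.ne' hp'.one_lt⟩
    have h01 : (0 : ZMod (p ^ k)) ≠ 1 := zero_ne_one
    have : {e : ZMod (p ^ k) // IsIdempotentElem e} ≃ Bool :=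
      { toFun := fun e => decide (e.1 = 1)
        invFun := fun b => if b then ⟨1, .one⟩ else ⟨0, .zero⟩
        left_inv := fun e => by
          rcases aux_idem_prime_pow hp' hk e.1 e.2 with h | h
          · apply Subtype.ext; simp [h, h01.symm]
          · apply Subtype.ext; simp [h]
        right_inv := fun b => by cases b <;> simp [h01] }
    rw [Nat.card_congr this, Nat.card_eq_fintype_card, Fintype.card_bool,
      Nat.primeFactors_prime_pow hk.ne' hp, Finset.card_singleton, pow_one]
  | zero => intro h; exact absurd h (lt_irrefl 0)
  | one =>
    intro _
    have : Subsingleton {e : ZMod 1 // IsIdempotentElem e} := by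
      constructor; intro a b; apply Subtype.ext; exact Subsingleton.elim _ _
    rw [Nat.card_eq_one_iff_unique.mpr ⟨this, ⟨⟨0, .zero⟩⟩⟩]
    simp
  | coprime a b ha hb hab iha ihb =>
    intro _
    have ha0 : 0 < a := lt_trans one_pos ha
    have hb0 : 0 < b := lt_trans one_pos hb
    have E := (auxRingEquivIdem (ZMod.chineseRemainder hab)).trans auxProdIdem
    rw [Nat.card_congr E, Nat.card_prod, iha ha0, ihb hb0,
      Nat.Coprime.primeFactors_mul hab, Finset.card_union_of_disjoint
        (Nat.Coprime.disjoint_primeFactors hab), pow_add]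


lemma aux_two_dvd_factor {p : ℕ} (hpp : p.Prime) (hpodd : Odd p) (k : ℕ) :
    2 ∣ p ^ (k - 1) * (p - 1) :=
  Dvd.dvd.mul_left (even_iff_two_dvd.mp (Nat.Odd.sub_odd hpodd odd_one)) _

lemma aux_odd_dvd_totient {b : ℕ} (hb : b ≠ 0) (hodd : Odd b) :
    2 ^ b.primeFactors.card ∣ b.totient := by
  rw [Nat.totient_eq_prod_factorization hb, Finsupp.prod, Nat.support_factorization,
    ← Finset.prod_const]
  refine Finset.prod_dvd_prod_of_dvd _ _ fun p hp => ?_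
  obtain ⟨hpp, hpb, -⟩ := Nat.mem_primeFactors.mp hp
  exact aux_two_dvd_factor hpp (hodd.of_dvd_nat hpb) _

lemma aux_odd_dvd_totient' {b : ℕ} (hb : b ≠ 0) (hodd : Odd b) {q : ℕ} (hq : q.Prime)
    (hqb : q ∣ b) (hq4 : q % 4 = 1) : 2 ^ (b.primeFactors.card + 1) ∣ b.totient := by
  have hqF : q ∈ b.primeFactors := Nat.mem_primeFactors.mpr ⟨hq, hqb, hb⟩
  have hcard : 1 ≤ b.primeFactors.card := Finset.card_pos.mpr ⟨q, hqF⟩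
  rw [Nat.totient_eq_prod_factorization hb, Finsupp.prod, Nat.support_factorization]
  have hdvd : (∏ p ∈ b.primeFactors, if p = q then 4 else 2) ∣
      ∏ p ∈ b.primeFactors, p ^ (b.factorization p - 1) * (p - 1) := by
    refine Finset.prod_dvd_prod_of_dvd _ _ fun p hp => ?_
    obtain ⟨hpp, hpb, -⟩ := Nat.mem_primeFactors.mp hp
    by_cases h : p = q
    · subst h
      simp only [if_pos rfl]
      have : 4 ∣ p - 1 := by omega
      exact Dvd.dvd.mul_left this _
    · rw [if_neg h]
      exact aux_two_dvd_factor hpp (hodd.of_dvd_nat hpb) _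
  refine dvd_trans (dvd_of_eq ?_) hdvd
  rw [← Finset.mul_prod_erase _ _ hqF, if_pos rfl]
  rw [Finset.prod_congr rfl (fun p hp => if_neg (Finset.ne_of_mem_erase hp)),
    Finset.prod_const, Finset.card_erase_of_mem hqF]
  have : 2 ^ (b.primeFactors.card + 1) = 2 ^ 2 * 2 ^ (b.primeFactors.card - 1) := by
    rw [← pow_add]; congr 1; omega
  rw [this]; norm_num



lemma aux_main_dvd {n : ℕ} (hn : 2 < n)
    (hnot : ¬ ∃ α : ℕ, Odd α ∧ (∀ p : ℕ, p.Prime → p ∣ α → p % 4 = 3) ∧ n = 2 * α) :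
    2 ^ n.primeFactors.card ∣ n.totient := by
  have hn0 : n ≠ 0 := by omega
  set a := n.factorization 2 with ha
  set b := n / 2 ^ a with hb
  have hsplit : 2 ^ a * b = n := Nat.ordProj_mul_ordCompl_eq_self n 2
  have hb2 : ¬ 2 ∣ b := Nat.not_dvd_ordCompl Nat.prime_two hn0
  have hb0 : b ≠ 0 := (Nat.ordCompl_pos 2 hn0).ne'
  have hbodd : Odd b := by
    rcases Nat.even_or_odd b with h | h
    · exact absurd (even_iff_two_dvd.mp h) hb2
    · exact h
  have hcop : Nat.Coprime (2 ^ a) b :=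
    Nat.Coprime.pow_left a ((Nat.prime_two.coprime_iff_not_dvd).mpr hb2)
  rcases Nat.eq_zero_or_pos a with ha0 | hapos
  · have hbn : b = n := by rw [← hsplit, ha0, pow_zero, one_mul]
    rw [← hbn]
    exact aux_odd_dvd_totient hb0 hbodd
  · have hφ : n.totient = (2 ^ a).totient * b.totient := by
      rw [← hsplit, Nat.totient_mul hcop]
    have hcards : n.primeFactors.card = 1 + b.primeFactors.card := by
      rw [← hsplit, Nat.Coprime.primeFactors_mul hcop,
        Finset.card_union_of_disjoint (Nat.Coprime.disjoint_primeFactors hcop),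
        Nat.primeFactors_prime_pow hapos.ne' Nat.prime_two, Finset.card_singleton]
    rcases eq_or_lt_of_le (Nat.one_le_iff_ne_zero.mpr hapos.ne') with ha1 | ha2
    · -- a = 1
      have ha1 : a = 1 := ha1.symm
      have hn2b : n = 2 * b := by rw [← hsplit, ha1, pow_one]
      have hex : ∃ p : ℕ, p.Prime ∧ p ∣ b ∧ p % 4 ≠ 3 := by
        by_contra h
        push_neg at h
        exact hnot ⟨b, hbodd, fun p hp hpb => h p hp hpb, hn2b⟩
      obtain ⟨p, hp, hpb, hp3⟩ := hex
      have hpodd : Odd p := hbodd.of_dvd_nat hpb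
      have hp4 : p % 4 = 1 := by
        have h2 : p % 2 = 1 := Nat.odd_iff.mp hpodd
        have := Nat.mod_mod_of_dvd p (by norm_num : (2:ℕ) ∣ 4)
        omega
      have := aux_odd_dvd_totient' hb0 hbodd hp hpb hp4
      rw [hφ, ha1, pow_one, Nat.totient_two, one_mul, hcards, Nat.add_comm]
      exact this
    · -- a ≥ 2
      have hφ2 : (2 ^ a).totient = 2 ^ (a - 1) := by
        rw [Nat.totient_prime_pow Nat.prime_two hapos]
        norm_num
      rw [hφ, hφ2, hcards, pow_add, pow_one]
      exact mul_dvd_mul (dvd_pow_self 2 (by omega : a - 1 ≠ 0)) (aux_odd_dvd_totient hb0 hbodd)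

noncomputable def auxUnitsEquiv {M : Type*} [CommMonoid M] : {a : M // IsUnit a} ≃ Mˣ where
  toFun a := a.2.unit
  invFun u := ⟨u, u.isUnit⟩
  left_inv a := Subtype.ext a.2.unit_spec
  right_inv u := Units.ext u.isUnit.unit_spec

theorem stmt_9 (m n : ℕ) (hm : 0 < m) (hdvd : n ∣ m) (hn : 2 < n)
    (hnot : ¬ ∃ α : ℕ, Odd α ∧ (∀ p : ℕ, p.Prime → p ∣ α → p % 4 = 3) ∧ n = 2 * α) :
    Nat.card (ZMod m →ₙ+* ZMod n) ∣
      Nat.card {ψ : ZMod m →+ ZMod n // Function.Surjective ψ} := by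
  have hn0 : 0 < n := by omega
  haveI : NeZero m := ⟨hm.ne'⟩
  haveI : NeZero n := ⟨hn0.ne'⟩
  have h1 : Nat.card (ZMod m →ₙ+* ZMod n) = 2 ^ n.primeFactors.card := by
    rw [Nat.card_congr (auxRingEquiv hdvd)]
    exact aux_card_idem n hn0
  have hsurj : ∀ f : ZMod m →+ ZMod n, Function.Surjective f ↔ IsUnit (f 1) := by
    intro f
    constructor
    · intro hf
      obtain ⟨x, hx⟩ := hf 1
      rw [aux_apply hdvd f x] at hx
      exact IsUnit.of_mul_eq_one _ (by rw [mul_comm]; exact hx)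
    · rintro ⟨u, hu⟩ c
      obtain ⟨k, hk⟩ := ZMod.intCast_surjective ((u⁻¹ : (ZMod n)ˣ) * c : ZMod n)
      refine ⟨(k : ZMod m), ?_⟩
      rw [aux_apply hdvd f, map_intCast, hk, ← hu, mul_comm (↑u⁻¹ * c) _, ← mul_assoc]
      simp
  have E : {ψ : ZMod m →+ ZMod n // Function.Surjective ψ} ≃ (ZMod n)ˣ :=
    ((auxAddEquiv hdvd).subtypeEquiv (fun f => hsurj f)).trans auxUnitsEquiv
  have h2 : Nat.card {ψ : ZMod m →+ ZMod n // Function.Surjective ψ} = n.totient := by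
    rw [Nat.card_congr E, Nat.card_eq_fintype_card, ZMod.card_units_eq_totient]
  rw [h1, h2]
  exact aux_main_dvd hn hnot
end
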